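/- Let EF be an evolution frame in which strong equivalence has finite index c on the set of descendants of a knowledge state s. If some infinite path p starting at s satisfies the until formula φ₁ U φ₂ (for state formulas φ₁, φ₂), then there exists a path p' starting at s of length at most c satisfying φ₁ U φ₂; dually, if some infinite path starting at s falsifies φ₁ U φ₂, then some path of length at most c starting at s falsifies it. Hence EF, s ⊨ E(φ₁ U φ₂) and EF, s ⊨ A(φ₁ U φ₂) can each be decided by examining only paths of length at most c. -/

import Mathlib

mutual
inductive SForm (Rule : Type) : Type
  | atom : Rule → SForm Rule
  | conj : SForm Rule → SForm Rule → SForm Rule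
  | nnot : SForm Rule → SForm Rule
  | ex : EForm Rule → SForm Rule
  | all : EForm Rule → SForm Rule
inductive EForm (Rule : Type) : Type
  | next : SForm Rule → EForm Rule
  | untl : SForm Rule → SForm Rule → EForm Rule
end

/-- A path in a transition system. -/
def IsPath {σ : Type} (R : σ → σ → Prop) (p : ℕ → σ) : Prop :=
  ∀ i, R (p i) (p (i + 1))

mutual
/-- Satisfaction of EKBL state formulas over a Kripke-style structure with
    states `σ`, transition relation `R`, and labelling `L`. -/
def SatS {Rule σ : Type} (R : σ → σ → Prop) (L : σ → Set Rule) : σ → SForm Rule → Prop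
  | s, .atom r => r ∈ L s
  | s, .conj φ ψ => SatS R L s φ ∧ SatS R L s ψ
  | s, .nnot φ => ¬ SatS R L s φ
  | s, .ex φ => ∃ p : ℕ → σ, IsPath R p ∧ p 0 = s ∧ SatE R L p φ
  | s, .all φ => ∀ p : ℕ → σ, IsPath R p → p 0 = s → SatE R L p φ
/-- Satisfaction of EKBL evolution formulas along a path. -/
def SatE {Rule σ : Type} (R : σ → σ → Prop) (L : σ → Set Rule) : (ℕ → σ) → EForm Rule → Prop
  | p, .next φ => SatS R L (p 1) φ
  | p, .untl φ ψ => ∃ i, SatS R L (p i) ψ ∧ ∀ j, j < i → SatS R L (p j) φ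
end

structure KState (Rule Event : Type) : Type where
  kb : Set Rule
  events : List Event

/-- Append a sequence of events to a knowledge state. -/
def KState.append {Rule Event : Type} (s : KState Rule Event) (es : List Event) :
    KState Rule Event := ⟨s.kb, s.events ++ es⟩

/-- All events of the list belong to the event class `EC`. -/
def InEC {Event : Type} (EC : Set Event) (es : List Event) : Prop := ∀ E ∈ es, E ∈ EC

/-- Successor relation on knowledge states induced by the event class `EC`. -/
def Succ {Rule Event : Type} (EC : Set Event) (s s' : KState Rule Event) : Prop :=
  ∃ E ∈ EC, s' = s.append [E]

/-- Strong equivalence of knowledge states with respect to belief operator `B`. -/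
def StrongEquiv {Rule Event : Type} (B : KState Rule Event → Set Rule) (EC : Set Event)
    (s s' : KState Rule Event) : Prop :=
  ∀ es : List Event, InEC EC es → B (s.append es) = B (s'.append es)

/-- k-equivalence of knowledge states. -/
def KEquiv {Rule Event : Type} (B : KState Rule Event → Set Rule) (EC : Set Event) (k : ℕ)
    (s s' : KState Rule Event) : Prop :=
  ∀ es : List Event, InEC EC es → es.length ≤ k → B (s.append es) = B (s'.append es)

/-- The equivalence class of `s` within `S` under the relation `R`. -/
def cls {α : Type} (R : α → α → Prop) (S : Set α) (s : α) : Set α := {t ∈ S | R s t}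

/-- The set of descendants of `s` (including `s` itself). -/
def dsc {Rule Event : Type} (EC : Set Event) (s : KState Rule Event) :
    Set (KState Rule Event) :=
  {t | ∃ es : List Event, InEC EC es ∧ t = s.append es}


section Aux

variable {Rule Event : Type} (B : KState Rule Event → Set Rule) (EC : Set Event)

lemma KState.append_nil' (s : KState Rule Event) : s.append [] = s := by
  simp [KState.append]

lemma KState.append_append' (s : KState Rule Event) (es fs : List Event) :
    (s.append es).append fs = s.append (es ++ fs) := by
  simp [KState.append]

lemma se_refl (s : KState Rule Event) : StrongEquiv B EC s s := fun _ _ => rfl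

lemma se_symm {s s' : KState Rule Event} (h : StrongEquiv B EC s s') :
    StrongEquiv B EC s' s := fun es hes => (h es hes).symm

lemma se_trans {s t u : KState Rule Event} (h1 : StrongEquiv B EC s t)
    (h2 : StrongEquiv B EC t u) : StrongEquiv B EC s u :=
  fun es hes => (h1 es hes).trans (h2 es hes)

lemma se_append {s s' : KState Rule Event} (h : StrongEquiv B EC s s') {E : Event}
    (hE : E ∈ EC) : StrongEquiv B EC (s.append [E]) (s'.append [E]) := by
  intro es hes
  rw [KState.append_append', KState.append_append']
  refine h (E :: es) ?_
  intro F hF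
  rcases List.mem_cons.mp hF with rfl | hF
  · exact hE
  · exact hes F hF

lemma path_events {p : ℕ → KState Rule Event} (hp : IsPath (Succ EC) p) :
    ∃ E : ℕ → Event, ∀ n, E n ∈ EC ∧ p (n + 1) = (p n).append [E n] := by
  have hp' : ∀ n, ∃ E ∈ EC, p (n + 1) = (p n).append [E] := hp
  choose E hE1 hE2 using hp'
  exact ⟨E, fun n => ⟨hE1 n, hE2 n⟩⟩

/-- Path surgery: follow the events of `p` through a reindexing `ρ`. -/
lemma trace {p : ℕ → KState Rule Event} (hp : IsPath (Succ EC) p) (ρ : ℕ → ℕ)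
    (h0 : StrongEquiv B EC (p 0) (p (ρ 0)))
    (hstep : ∀ n, StrongEquiv B EC (p (ρ n + 1)) (p (ρ (n + 1)))) :
    ∃ q, IsPath (Succ EC) q ∧ q 0 = p 0 ∧ ∀ n, StrongEquiv B EC (p (ρ n)) (q n) := by
  obtain ⟨E, hE⟩ := path_events EC hp
  let q : ℕ → KState Rule Event := fun n => Nat.rec (p 0) (fun m qm => qm.append [E (ρ m)]) n
  have hqs : ∀ n, q (n + 1) = (q n).append [E (ρ n)] := fun n => rfl
  have hinv : ∀ n, StrongEquiv B EC (p (ρ n)) (q n) := by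
    intro n
    induction n with
    | zero => exact se_symm B EC h0
    | succ n ih =>
        rw [hqs]
        have h2 := se_append B EC ih (hE (ρ n)).1
        rw [← (hE (ρ n)).2] at h2
        exact se_trans B EC (se_symm B EC (hstep n)) h2
  refine ⟨q, fun n => ⟨E (ρ n), (hE (ρ n)).1, hqs n⟩, rfl, hinv⟩

lemma path_transfer {s s' : KState Rule Event} {p : ℕ → KState Rule Event}
    (h : StrongEquiv B EC s s') (hp : IsPath (Succ EC) p) (h0 : p 0 = s) :
    ∃ q, IsPath (Succ EC) q ∧ q 0 = s' ∧ ∀ n, StrongEquiv B EC (p n) (q n) := by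
  obtain ⟨E, hE⟩ := path_events EC hp
  let q : ℕ → KState Rule Event := fun n => Nat.rec s' (fun m qm => qm.append [E m]) n
  have hqs : ∀ n, q (n + 1) = (q n).append [E n] := fun n => rfl
  have hinv : ∀ n, StrongEquiv B EC (p n) (q n) := by
    intro n
    induction n with
    | zero => rw [h0]; exact h
    | succ n ih =>
        rw [hqs]
        have h2 := se_append B EC ih (hE n).1
        rwa [← (hE n).2] at h2
  exact ⟨q, fun n => ⟨E n, (hE n).1, hqs n⟩, rfl, hinv⟩

end Aux

mutual
theorem satS_congr {Rule Event : Type} (B : KState Rule Event → Set Rule) (EC : Set Event) :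
    ∀ (φ : SForm Rule) (s s' : KState Rule Event), StrongEquiv B EC s s' →
      (SatS (Succ EC) B s φ ↔ SatS (Succ EC) B s' φ)
  | .atom r, s, s', h => by
      have hB : B s = B s' := by
        have := h [] (fun E hE => absurd hE List.not_mem_nil)
        rwa [KState.append_nil', KState.append_nil'] at this
      simp [SatS, hB]
  | .conj φ ψ, s, s', h => by
      simp only [SatS]
      exact and_congr (satS_congr B EC φ s s' h) (satS_congr B EC ψ s s' h)
  | .nnot φ, s, s', h => by
      simp only [SatS]
      exact not_congr (satS_congr B EC φ s s' h)
  | .ex φ, s, s', h => by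
      simp only [SatS]
      constructor
      · rintro ⟨p, hp, h0, hφ⟩
        obtain ⟨q, hq, hq0, heq⟩ := path_transfer B EC h hp h0
        exact ⟨q, hq, hq0, (satE_congr B EC φ p q heq).mp hφ⟩
      · rintro ⟨p, hp, h0, hφ⟩
        obtain ⟨q, hq, hq0, heq⟩ := path_transfer B EC (se_symm B EC h) hp h0
        exact ⟨q, hq, hq0, (satE_congr B EC φ p q heq).mp hφ⟩
  | .all φ, s, s', h => by
      simp only [SatS]
      constructor
      · intro H p hp h0
        obtain ⟨q, hq, hq0, heq⟩ := path_transfer B EC (se_symm B EC h) hp h0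
        exact (satE_congr B EC φ p q heq).mpr (H q hq hq0)
      · intro H p hp h0
        obtain ⟨q, hq, hq0, heq⟩ := path_transfer B EC h hp h0
        exact (satE_congr B EC φ p q heq).mpr (H q hq hq0)

theorem satE_congr {Rule Event : Type} (B : KState Rule Event → Set Rule) (EC : Set Event) :
    ∀ (φ : EForm Rule) (p q : ℕ → KState Rule Event),
      (∀ n, StrongEquiv B EC (p n) (q n)) →
      (SatE (Succ EC) B p φ ↔ SatE (Succ EC) B q φ)
  | .next φ, p, q, h => by
      simp only [SatE]
      exact satS_congr B EC φ _ _ (h 1)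
  | .untl φ ψ, p, q, h => by
      simp only [SatE]
      exact exists_congr fun i => and_congr (satS_congr B EC ψ _ _ (h i))
        (forall_congr' fun j => imp_congr Iff.rfl (satS_congr B EC φ _ _ (h j)))
end

section Main

variable {Rule Event : Type} (B : KState Rule Event → Set Rule) (EC : Set Event)

lemma path_mem_dsc {s : KState Rule Event} {p : ℕ → KState Rule Event}
    (hp : IsPath (Succ EC) p) (h0 : p 0 = s) : ∀ n, p n ∈ dsc EC s := by
  obtain ⟨E, hE⟩ := path_events EC hp
  intro n
  induction n with
  | zero =>
      exact ⟨[], fun F hF => absurd hF List.not_mem_nil,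
        by rw [h0, KState.append_nil']⟩
  | succ n ih =>
      obtain ⟨es, hes, hpe⟩ := ih
      refine ⟨es ++ [E n], ?_, ?_⟩
      · intro F hF
        rcases List.mem_append.mp hF with hF | hF
        · exact hes F hF
        · rcases List.mem_singleton.mp hF with rfl
          exact (hE n).1
      · rw [(hE n).2, hpe, KState.append_append']

lemma pigeon {s : KState Rule Event} {c : ℕ} {p : ℕ → KState Rule Event}
    (hfin : (cls (StrongEquiv B EC) (dsc EC s) '' dsc EC s).Finite)
    (hc : (cls (StrongEquiv B EC) (dsc EC s) '' dsc EC s).ncard ≤ c)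
    (hp : IsPath (Succ EC) p) (h0 : p 0 = s) :
    ∃ j k, j < k ∧ k ≤ c ∧ StrongEquiv B EC (p j) (p k) := by
  set T := cls (StrongEquiv B EC) (dsc EC s) '' dsc EC s with hT
  haveI : Fintype T := hfin.fintype
  have hmem : ∀ n : ℕ, cls (StrongEquiv B EC) (dsc EC s) (p n) ∈ T :=
    fun n => Set.mem_image_of_mem _ (path_mem_dsc EC hp h0 n)
  have hcard : Fintype.card T ≤ c := by
    have : Fintype.card T = T.ncard := by
      rw [← Nat.card_coe_set_eq, Nat.card_eq_fintype_card]
    omega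
  have hlt : Fintype.card T < Fintype.card (Fin (c + 1)) := by
    simp only [Fintype.card_fin]
    omega
  obtain ⟨a, b, hab, hfab⟩ := Fintype.exists_ne_map_eq_of_card_lt
    (fun n : Fin (c + 1) => (⟨cls (StrongEquiv B EC) (dsc EC s) (p n), hmem n⟩ : T)) hlt
  have hcls : cls (StrongEquiv B EC) (dsc EC s) (p a) =
      cls (StrongEquiv B EC) (dsc EC s) (p b) := congrArg Subtype.val hfab
  have key : ∀ x y : Fin (c + 1),
      cls (StrongEquiv B EC) (dsc EC s) (p x) = cls (StrongEquiv B EC) (dsc EC s) (p y) →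
      StrongEquiv B EC (p x) (p y) := by
    intro x y hxy
    have hy : p y ∈ cls (StrongEquiv B EC) (dsc EC s) (p y) :=
      ⟨path_mem_dsc EC hp h0 y, se_refl B EC _⟩
    rw [← hxy] at hy
    exact hy.2
  rcases hab.lt_or_gt with hlt' | hlt'
  · exact ⟨a, b, hlt', Fin.is_le b, key a b hcls⟩
  · exact ⟨b, a, hlt', Fin.is_le a, key b a hcls.symm⟩

lemma shorten {s : KState Rule Event} {c : ℕ} {φ₁ φ₂ : SForm Rule}
    (hfin : (cls (StrongEquiv B EC) (dsc EC s) '' dsc EC s).Finite)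
    (hc : (cls (StrongEquiv B EC) (dsc EC s) '' dsc EC s).ncard ≤ c) :
    ∀ i (p : ℕ → KState Rule Event), IsPath (Succ EC) p → p 0 = s →
      SatS (Succ EC) B (p i) φ₂ → (∀ j < i, SatS (Succ EC) B (p j) φ₁) →
      ∃ q, IsPath (Succ EC) q ∧ q 0 = s ∧
        ∃ i' ≤ c, SatS (Succ EC) B (q i') φ₂ ∧ ∀ j < i', SatS (Succ EC) B (q j) φ₁ := by
  intro i
  induction i using Nat.strong_induction_on with
  | _ i IH =>
    intro p hp h0 hψ hφ
    by_cases hic : i ≤ c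
    · exact ⟨p, hp, h0, i, hic, hψ, hφ⟩
    push_neg at hic
    obtain ⟨j, k, hjk, hkc, hse⟩ := pigeon B EC hfin hc hp h0
    set d := k - j with hdd
    set ρ : ℕ → ℕ := fun n => if n < j then n else n + d with hρ
    have h0' : StrongEquiv B EC (p 0) (p (ρ 0)) := by
      by_cases hj : 0 < j
      · simp only [hρ, if_pos hj]
        exact se_refl B EC _
      · have hj0 : j = 0 := by omega
        have : ρ 0 = k := by simp [hρ, hj0]; omega
        rw [this]
        rw [hj0] at hse
        exact hse
    have hstep : ∀ n, StrongEquiv B EC (p (ρ n + 1)) (p (ρ (n + 1))) := by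
      intro n
      rcases lt_trichotomy (n + 1) j with h1 | h1 | h1
      · have hn : n < j := by omega
        simp only [hρ, if_pos hn, if_pos h1]
        exact se_refl B EC _
      · have hn : n < j := by omega
        have hn1 : ¬ n + 1 < j := by omega
        simp only [hρ, if_pos hn, if_neg hn1]
        have e2 : n + 1 + d = k := by omega
        rw [e2, h1]
        exact hse
      · have hn : ¬ n < j := by omega
        have hn1 : ¬ n + 1 < j := by omega
        simp only [hρ, if_neg hn, if_neg hn1]
        have e : n + d + 1 = n + 1 + d := by omega
        rw [e]
        exact se_refl B EC _
    obtain ⟨q, hq, hq0, heq⟩ := trace B EC hp ρ h0' hstep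
    set i' := i - d with hi'
    have hii : i' < i := by omega
    have hρi : ρ i' = i := by
      have h1 : ¬ i' < j := by omega
      simp only [hρ, if_neg h1]
      omega
    have hψ' : SatS (Succ EC) B (q i') φ₂ := by
      have := heq i'
      rw [hρi] at this
      exact (satS_congr B EC φ₂ _ _ this).mp hψ
    have hφ' : ∀ m < i', SatS (Succ EC) B (q m) φ₁ := by
      intro m hm
      have hmi : ρ m < i := by
        by_cases hmj : m < j
        · simp only [hρ, if_pos hmj]; omega
        · simp only [hρ, if_neg hmj]; omega
      exact (satS_congr B EC φ₁ _ _ (heq m)).mp (hφ _ hmi)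
    exact IH i' hii q hq (hq0.trans h0) hψ' hφ'

lemma falsify {s : KState Rule Event} {c : ℕ} {φ₁ φ₂ : SForm Rule}
    (hfin : (cls (StrongEquiv B EC) (dsc EC s) '' dsc EC s).Finite)
    (hc : (cls (StrongEquiv B EC) (dsc EC s) '' dsc EC s).ncard ≤ c)
    {p : ℕ → KState Rule Event} (hp : IsPath (Succ EC) p) (h0 : p 0 = s)
    (hno : ∀ i ≤ c, ¬(SatS (Succ EC) B (p i) φ₂ ∧ ∀ j < i, SatS (Succ EC) B (p j) φ₁)) :
    ∃ q, IsPath (Succ EC) q ∧ q 0 = s ∧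
      ∀ i, ¬(SatS (Succ EC) B (q i) φ₂ ∧ ∀ j < i, SatS (Succ EC) B (q j) φ₁) := by
  by_cases hall : ∀ m ≤ c, SatS (Succ EC) B (p m) φ₁
  · have hnψ : ∀ m ≤ c, ¬ SatS (Succ EC) B (p m) φ₂ := by
      intro m hm hψ
      exact hno m hm ⟨hψ, fun j hj => hall j (by omega)⟩
    obtain ⟨j, k, hjk, hkc, hse⟩ := pigeon B EC hfin hc hp h0
    let ρ : ℕ → ℕ := fun n => Nat.rec 0 (fun _ m => if m + 1 = k then j else m + 1) n
    have hρs : ∀ n, ρ (n + 1) = if ρ n + 1 = k then j else ρ n + 1 := fun n => rfl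
    have hρlt : ∀ n, ρ n < k := by
      intro n
      induction n with
      | zero =>
          have : ρ 0 = 0 := rfl
          omega
      | succ n ih =>
          rw [hρs]
          split
          · omega
          · next h => omega
    have h0' : StrongEquiv B EC (p 0) (p (ρ 0)) := se_refl B EC _
    have hstep : ∀ n, StrongEquiv B EC (p (ρ n + 1)) (p (ρ (n + 1))) := by
      intro n
      rw [hρs]
      split
      · next h => rw [h]; exact se_symm B EC hse
      · exact se_refl B EC _
    obtain ⟨q, hq, hq0, heq⟩ := trace B EC hp ρ h0' hstep
    refine ⟨q, hq, hq0.trans h0, fun i hw => ?_⟩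
    exact hnψ (ρ i) (le_trans (le_of_lt (hρlt i)) hkc)
      ((satS_congr B EC φ₂ _ _ (heq i)).mpr hw.1)
  · push_neg at hall
    obtain ⟨m, hm, hφm⟩ := hall
    refine ⟨p, hp, h0, fun i hw => ?_⟩
    rcases lt_or_ge m i with him | him
    · exact hφm (hw.2 m him)
    · exact hno i (le_trans him hm) hw

end Main

/-- If strong equivalence has finite index at most `c` on the
    descendants of `s`, then `E(φ₁ U φ₂)` and `A(φ₁ U φ₂)` at `s` can be decided by
    examining only paths of length at most `c`: some (resp. every) path from `s`
    satisfies `φ₁ U φ₂` iff some (resp. every) path from `s` satisfies it with a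
    witness at position at most `c`. -/
theorem until_bounded_paths {Rule Event : Type} (B : KState Rule Event → Set Rule)
    (EC : Set Event) (s : KState Rule Event) (c : ℕ) (φ₁ φ₂ : SForm Rule)
    (hfin : (cls (StrongEquiv B EC) (dsc EC s) '' dsc EC s).Finite)
    (hc : (cls (StrongEquiv B EC) (dsc EC s) '' dsc EC s).ncard ≤ c) :
    ((∃ p : ℕ → KState Rule Event, IsPath (Succ EC) p ∧ p 0 = s ∧
        SatE (Succ EC) B p (EForm.untl φ₁ φ₂)) ↔
      (∃ p : ℕ → KState Rule Event, IsPath (Succ EC) p ∧ p 0 = s ∧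
        ∃ i ≤ c, SatS (Succ EC) B (p i) φ₂ ∧ ∀ j < i, SatS (Succ EC) B (p j) φ₁)) ∧
    ((∀ p : ℕ → KState Rule Event, IsPath (Succ EC) p → p 0 = s →
        SatE (Succ EC) B p (EForm.untl φ₁ φ₂)) ↔
      (∀ p : ℕ → KState Rule Event, IsPath (Succ EC) p → p 0 = s →
        ∃ i ≤ c, SatS (Succ EC) B (p i) φ₂ ∧ ∀ j < i, SatS (Succ EC) B (p j) φ₁)) := by
  have hSatE : ∀ p : ℕ → KState Rule Event,
      SatE (Succ EC) B p (EForm.untl φ₁ φ₂) ↔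
      ∃ i, SatS (Succ EC) B (p i) φ₂ ∧ ∀ j, j < i → SatS (Succ EC) B (p j) φ₁ := by
    intro p
    simp [SatE]
  constructor
  · constructor
    · rintro ⟨p, hp, h0, hE⟩
      rw [hSatE] at hE
      obtain ⟨i, hψ, hφ⟩ := hE
      obtain ⟨q, hq, hq0, i', hic, hψ', hφ'⟩ := shorten B EC hfin hc i p hp h0 hψ hφ
      exact ⟨q, hq, hq0, i', hic, hψ', hφ'⟩
    · rintro ⟨p, hp, h0, i, _, hψ, hφ⟩
      exact ⟨p, hp, h0, (hSatE p).mpr ⟨i, hψ, hφ⟩⟩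
  · constructor
    · intro H
      by_contra hcon
      rcases not_forall.mp hcon with ⟨p, hcp⟩
      rcases _root_.not_imp.mp hcp with ⟨hp, hcp2⟩
      rcases _root_.not_imp.mp hcp2 with ⟨h0, hne⟩
      have hno : ∀ i ≤ c,
          ¬(SatS (Succ EC) B (p i) φ₂ ∧ ∀ j < i, SatS (Succ EC) B (p j) φ₁) :=
        fun i hi hw => hne ⟨i, hi, hw⟩
      obtain ⟨q, hq, hq0, hqno⟩ := falsify B EC hfin hc hp h0 hno
      have hH := H q hq hq0
      rw [hSatE] at hH
      obtain ⟨i, hψ, hφ⟩ := hH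
      exact hqno i ⟨hψ, hφ⟩
    · intro H p hp h0
      obtain ⟨i, _, hψ, hφ⟩ := H p hp h0
      exact (hSatE p).mpr ⟨i, hψ, hφ⟩
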